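/- For all n ≥ 0, if (d + √k)^n = a + b√k with a, b rational, then the n-th iterate of the map f(x) = (dx + k)/(x + d) applied to ∞ equals a/b. -/

import Mathlib

/-- The linear fractional transformation `f(x) = (dx + k)/(x + d)` acting on
the projective line `ℚℙ¹ = OnePoint ℚ`, with `f(∞) = d`. -/
noncomputable def lft (d k : ℚ) : OnePoint ℚ → OnePoint ℚ := fun x =>
  match x with
  | none => (d : OnePoint ℚ)
  | some x => if x + d = 0 then OnePoint.infty else ((d * x + k) / (x + d) : ℚ)

/-- The point `a/b` of the projective line, with `a/0 = ∞`. -/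
noncomputable def ratio (a b : ℚ) : OnePoint ℚ :=
  if b = 0 then OnePoint.infty else ((a / b : ℚ) : OnePoint ℚ)

def P (d k : ℚ) : ℕ → ℚ × ℚ
  | 0 => (1, 0)
  | n + 1 => ((P d k n).1 * d + (P d k n).2 * k, (P d k n).1 + (P d k n).2 * d)

lemma Ppos (d k : ℚ) (hd : 0 < d) (hk : 0 < k) (n : ℕ) :
    0 < (P d k n).1 ∧ 0 ≤ (P d k n).2 := by
  induction n with
  | zero => simp [P]
  | succ n ih =>
    obtain ⟨h1, h2⟩ := ih
    constructor
    · simp only [P]; positivity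
    · simp only [P]; positivity

lemma Pval (d k : ℚ) (hk : 0 ≤ k) (n : ℕ) :
    ((d : ℝ) + Real.sqrt k) ^ n = ((P d k n).1 : ℝ) + ((P d k n).2 : ℝ) * Real.sqrt k := by
  induction n with
  | zero => simp [P]
  | succ n ih =>
    have hs : Real.sqrt k ^ 2 = (k : ℝ) := Real.sq_sqrt (by exact_mod_cast hk)
    rw [pow_succ, ih]
    simp only [P]
    push_cast
    linear_combination ((P d k n).2 : ℝ) * hs

lemma sqrt_irr (k : ℚ) (hk : 0 < k) (hknsq : ¬ ∃ r : ℚ, r ^ 2 = k) (r : ℚ) :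
    (r : ℝ) ≠ Real.sqrt k := by
  intro hr
  apply hknsq
  refine ⟨r, ?_⟩
  have : ((r ^ 2 : ℚ) : ℝ) = ((k : ℚ) : ℝ) := by
    push_cast
    rw [hr, Real.sq_sqrt (by positivity)]
  exact_mod_cast this

lemma uniq (k : ℚ) (hk : 0 < k) (hknsq : ¬ ∃ r : ℚ, r ^ 2 = k) (a b a' b' : ℚ)
    (h : (a : ℝ) + (b : ℝ) * Real.sqrt k = (a' : ℝ) + (b' : ℝ) * Real.sqrt k) :
    a = a' ∧ b = b' := by
  by_cases hb : b = b'
  · subst hb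
    constructor
    · exact_mod_cast add_right_cancel h
    · rfl
  · exfalso
    have hbb : ((b : ℝ) - b') ≠ 0 := by
      intro h0
      apply hb
      have : (b : ℝ) = b' := by linarith
      exact_mod_cast this
    have : ((a' - a) / (b - b') : ℚ) = Real.sqrt k := by
      push_cast
      field_simp
      linarith [h]
    exact sqrt_irr k hk hknsq _ this

lemma iter_lft (d k : ℚ) (hd : 0 < d) (hk : 0 < k) (n : ℕ) :
    (lft d k)^[n] OnePoint.infty = ratio (P d k n).1 (P d k n).2 := by
  induction n with
  | zero => simp [P, ratio, OnePoint.infty]; rfl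
  | succ n ih =>
    obtain ⟨h1, h2⟩ := Ppos d k hd hk n
    rw [Function.iterate_succ_apply', ih]
    set p := (P d k n).1
    set q := (P d k n).2
    show lft d k (ratio p q) = ratio (p * d + q * k) (p + q * d)
    by_cases hq : q = 0
    · have hp : p ≠ 0 := ne_of_gt h1
      rw [hq]
      simp only [ratio, if_pos rfl]
      have hne : p + 0 * d ≠ 0 := by simpa using hp
      rw [if_neg hne]
      have : (p * d + 0 * k) / (p + 0 * d) = d := by field_simp; ring
      rw [this]
      rfl
    · have hq' : 0 < q := lt_of_le_of_ne h2 (Ne.symm hq)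
      have hne2 : p + q * d ≠ 0 := by positivity
      simp only [ratio, if_neg hq, if_neg hne2]
      have hx : p / q + d ≠ 0 := by positivity
      show lft d k (some (p / q)) = _
      simp only [lft, if_neg hx]
      congr 1
      field_simp

theorem stmt0 (k d : ℚ) (hk : 0 < k) (hknsq : ¬ ∃ r : ℚ, r ^ 2 = k) (hd : 0 < d)
    (n : ℕ) (a b : ℚ)
    (hab : ((d : ℝ) + Real.sqrt k) ^ n = (a : ℝ) + (b : ℝ) * Real.sqrt k) :
    (lft d k)^[n] OnePoint.infty = ratio a b := by
  have hv := Pval d k hk.le n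
  obtain ⟨ha, hb⟩ := uniq k hk hknsq (P d k n).1 (P d k n).2 a b (hv ▸ hab)
  rw [← ha, ← hb]
  exact iter_lft d k hd hk n
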